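/- arXiv:2005.11518 — 4 statements merged into one kernel-verified Lean document; each statement's English description precedes it below -/
import Mathlib

section
/- In a weakly idempotent complete additive category, every bounded contractible cochain complex splits; more precisely, if a contractible bounded complex M has leftmost nonzero term M^m with differential d^m : M^m → M^{m+1}, then d^m is a split monomorphism and M is isomorphic to the direct sum of the complex (M^m →(id) M^m, placed in degrees m and m+1 via the cone of id) and a contractible complex of strictly smaller essential length. -/
open CategoryTheory CategoryTheory.Limits ZeroObject

universe v u

variable (B : Type u) [Category.{v} B] [Preadditive B] [HasZeroObject B]
  [HasBinaryBiproducts B]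

noncomputable instance : HasBinaryBiproducts (HomologicalComplex B (ComplexShape.up ℤ)) :=
  HasBinaryBiproducts.of_hasBinaryProducts

/-- An additive category is weakly idempotent complete if every split monomorphism
gives a direct sum decomposition. -/
def WeaklyIdempotentComplete : Prop :=
  ∀ ⦃X Y : B⦄ (i : X ⟶ Y) (p : Y ⟶ X), i ≫ p = 𝟙 X →
    ∃ (Z : B) (e : Y ≅ X ⊞ Z), i ≫ e.hom = biprod.inl

/-- The split complex with degree `i` term `N i ⊞ N (i + 1)`. -/
noncomputable def splitComplex (N : ℤ → B) : CochainComplex B ℤ :=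
  CochainComplex.of (fun i => N i ⊞ N (i + 1))
    (fun _ => biprod.snd ≫ biprod.inl)
    (fun _ => by simp)

/-- The cone of `id_A`, placed in degrees `m` and `m + 1`. -/
noncomputable def coneOfId (A : B) (m : ℤ) : CochainComplex B ℤ :=
  splitComplex B (fun i => if i = m + 1 then A else 0)

section Aux

set_option linter.unusedSectionVars false

variable {B}
/-- reducible copy of `coneOfId` -/
noncomputable abbrev coneC (A : B) (m : ℤ) : CochainComplex B ℤ :=
  CochainComplex.of (fun i => (if i = m + 1 then A else 0) ⊞ (if i + 1 = m + 1 then A else 0))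
    (fun _ => biprod.snd ≫ biprod.inl)
    (fun _ => by simp)

variable (M : CochainComplex B ℤ) (m : ℤ) (Z : B) (e : M.X (m+1) ≅ (M.X m) ⊞ Z)

/-- degreewise pieces of the complement complex -/
noncomputable def auxX (i : ℤ) : B :=
  if i < m + 1 then 0 else if i = m + 1 then Z else M.X i

lemma auxX_eq_Z : auxX M m Z (m+1) = Z := by simp [auxX]

lemma auxX_eq_M (i : ℤ) (h : m + 1 < i) : auxX M m Z i = M.X i := by
  rw [auxX, if_neg (by omega), if_neg (by omega)]

lemma auxX_isZero (i : ℤ) (h : i < m + 1) : IsZero (auxX M m Z i) := by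
  rw [auxX, if_pos h]; exact isZero_zero B

noncomputable def auxD (i : ℤ) : auxX M m Z i ⟶ auxX M m Z (i+1) :=
  if h : i = m + 1 then
    eqToHom (by rw [h]; exact auxX_eq_Z M m Z) ≫ biprod.inr ≫ e.inv ≫
      M.d (m+1) (m+1+1) ≫ eqToHom (by rw [h]; exact (auxX_eq_M M m Z (m+1+1) (by omega)).symm)
  else if h2 : m + 1 < i then
    eqToHom (auxX_eq_M M m Z i h2) ≫ M.d i (i+1) ≫
      eqToHom (auxX_eq_M M m Z (i+1) (by omega)).symm
  else 0

lemma auxD_comp (i : ℤ) : auxD M m Z e i ≫ auxD M m Z e (i+1) = 0 := by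
  by_cases h : i = m + 1
  · subst h
    rw [auxD, dif_pos rfl, auxD, dif_neg (by omega), dif_pos (by omega)]
    simp
  · by_cases h2 : m + 1 < i
    · rw [auxD, dif_neg h, dif_pos h2, auxD, dif_neg (by omega), dif_pos (by omega)]
      simp
    · rw [auxD, dif_neg h, dif_neg h2, zero_comp]

/-- The complement complex. -/
noncomputable abbrev auxM' : CochainComplex B ℤ :=
  CochainComplex.of (auxX M m Z) (auxD M m Z e) (auxD_comp M m Z e)

lemma auxM'_d (i : ℤ) : (auxM' M m Z e).d i (i+1) = auxD M m Z e i :=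
  CochainComplex.of_d _ _ _

lemma coneOfId_d (A : B) (k i : ℤ) :
    (coneC A k).d i (i+1) = biprod.snd ≫ biprod.inl := by
  simp [coneOfId, splitComplex]

variable (hd : M.d m (m+1) ≫ e.hom = biprod.inl)
variable (h0 : ∀ i, i < m → IsZero (M.X i))

/-- projection onto the cone -/
noncomputable def conePi : M ⟶ coneC (M.X m) m where
  f i :=
    if h : i = m then
      eqToHom (congrArg M.X h) ≫
        (biprod.lift 0 (eqToHom (if_pos rfl).symm) :
          M.X m ⟶ (if (m:ℤ) = m+1 then M.X m else 0) ⊞ (if m+1 = m+1 then M.X m else 0)) ≫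
        eqToHom (congrArg (coneC (M.X m) m).X h.symm)
    else if h : i = m + 1 then
      eqToHom (congrArg M.X h) ≫ e.hom ≫ biprod.fst ≫
        (biprod.lift (eqToHom (if_pos rfl).symm) 0 :
          M.X m ⟶ (if (m+1:ℤ) = m+1 then M.X m else 0) ⊞ (if m+1+1 = m+1 then M.X m else 0)) ≫
        eqToHom (congrArg (coneC (M.X m) m).X h.symm)
    else 0
  comm' := by
    rintro i j (rfl : i + 1 = j)
    have _ := Z; have _ := e; have _ := hd; have _ := h0
    by_cases h : i = m
    · subst h
      rw [dif_pos rfl, dif_neg (by omega), dif_pos rfl, coneOfId_d]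
      simp only [eqToHom_refl, Category.id_comp, Category.comp_id]
      rw [reassoc_of% hd]
      apply biprod.hom_ext <;> simp
    · by_cases h2 : i = m + 1
      · subst h2
        rw [dif_neg (by omega), dif_pos rfl, dif_neg (by omega), dif_neg (by omega), coneOfId_d]
        simp
      · by_cases h3 : i + 1 = m
        · rw [dif_neg h, dif_neg h2, dif_pos h3, zero_comp,
            show M.d i (i+1) = 0 from (h0 i (by omega)).eq_of_src _ _, zero_comp]
        · rw [dif_neg h, dif_neg h2, dif_neg h3, dif_neg (by omega)]
          simp

/-- inclusion of the cone -/
noncomputable def coneInc : coneC (M.X m) m ⟶ M where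
  f i :=
    if h : i = m then
      eqToHom (congrArg (coneC (M.X m) m).X h) ≫
        (biprod.snd :
          ((if (m:ℤ) = m+1 then M.X m else 0) ⊞ (if m+1 = m+1 then M.X m else 0)) ⟶ _) ≫
        eqToHom (if_pos rfl) ≫ eqToHom (congrArg M.X h.symm)
    else if h : i = m + 1 then
      eqToHom (congrArg (coneC (M.X m) m).X h) ≫
        (biprod.fst :
          ((if (m+1:ℤ) = m+1 then M.X m else 0) ⊞ (if m+1+1 = m+1 then M.X m else 0)) ⟶ _) ≫
        eqToHom (if_pos rfl) ≫ M.d m (m+1) ≫ eqToHom (congrArg M.X h.symm)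
    else 0
  comm' := by
    rintro i j (rfl : i + 1 = j)
    have _ := Z; have _ := e; have _ := hd; have _ := h0
    by_cases h : i = m
    · subst h
      rw [dif_pos rfl, dif_neg (by omega), dif_pos rfl, coneOfId_d]
      simp
    · by_cases h2 : i = m + 1
      · subst h2
        rw [dif_neg (by omega), dif_pos rfl, dif_neg (by omega), dif_neg (by omega), coneOfId_d]
        simp
      · by_cases h3 : i + 1 = m
        · subst h3
          rw [dif_neg h, dif_neg h2, dif_pos rfl, coneOfId_d]
          simp
        · rw [dif_neg h, dif_neg h2, dif_neg h3, dif_neg (by omega)]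
          simp

/-- projection onto the complement -/
noncomputable def auxPi : M ⟶ auxM' M m Z e where
  f i :=
    if h : i = m + 1 then
      eqToHom (congrArg M.X h) ≫ e.hom ≫ biprod.snd ≫ eqToHom (auxX_eq_Z M m Z).symm ≫
        eqToHom (congrArg (auxM' M m Z e).X h.symm)
    else if h2 : m + 1 < i then
      eqToHom (auxX_eq_M M m Z i h2).symm
    else 0
  comm' := by
    rintro i j (rfl : i + 1 = j)
    have _ := Z; have _ := e; have _ := hd; have _ := h0
    by_cases h : i = m + 1
    · subst h
      rw [dif_pos rfl, dif_neg (by omega), dif_pos (by omega), auxM'_d, auxD, dif_pos rfl]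
      simp only [eqToHom_refl, Category.comp_id, Category.id_comp, Category.assoc,
        eqToHom_trans, eqToHom_trans_assoc]
      have h1 : biprod.inl ≫ e.inv = M.d m (m+1) := by
        rw [← hd]; simp
      have key : ∀ {W : B} (g : M.X (m+1+1) ⟶ W),
          (biprod.snd : M.X m ⊞ Z ⟶ _) ≫ biprod.inr ≫ e.inv ≫ M.d (m+1) (m+1+1) ≫ g =
          e.inv ≫ M.d (m+1) (m+1+1) ≫ g := by
        intro W g
        rw [← Category.assoc, show (biprod.snd ≫ biprod.inr : M.X m ⊞ Z ⟶ _) =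
          𝟙 _ - biprod.fst ≫ biprod.inl from by rw [← biprod.total]; abel]
        simp [Preadditive.sub_comp, reassoc_of% h1]
      rw [key]
      simp
    · by_cases h2 : m + 1 < i
      · rw [dif_neg h, dif_pos h2, dif_neg (by omega), dif_pos (by omega), auxM'_d, auxD,
          dif_neg h, dif_pos h2]
        simp
      · by_cases h3 : i = m
        · subst h3
          rw [dif_neg h, dif_neg h2, zero_comp, dif_pos rfl]
          simp [reassoc_of% hd]
        · rw [dif_neg h, dif_neg h2, zero_comp, dif_neg (by omega), dif_neg (by omega),
            comp_zero]

/-- inclusion of the complement -/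
noncomputable def auxInc : auxM' M m Z e ⟶ M where
  f i :=
    if h : i = m + 1 then
      eqToHom (congrArg (auxM' M m Z e).X h) ≫ eqToHom (auxX_eq_Z M m Z) ≫ biprod.inr ≫
        e.inv ≫ eqToHom (congrArg M.X h.symm)
    else if h2 : m + 1 < i then
      eqToHom (auxX_eq_M M m Z i h2)
    else 0
  comm' := by
    rintro i j (rfl : i + 1 = j)
    by_cases h : i = m + 1
    · subst h
      rw [dif_pos rfl, dif_neg (by omega), dif_pos (by omega), auxM'_d, auxD, dif_pos rfl]
      simp
    · by_cases h2 : m + 1 < i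
      · rw [dif_neg h, dif_pos h2, dif_neg (by omega), dif_pos (by omega), auxM'_d, auxD,
          dif_neg h, dif_pos h2]
        simp
      · rw [dif_neg h, dif_neg h2, zero_comp, auxM'_d, auxD, dif_neg h, dif_neg h2, zero_comp]

lemma coneX_isZero (A : B) (k i : ℤ) (h1 : i ≠ k) (h2 : i ≠ k + 1) :
    IsZero ((coneC A k).X i) := by
  rw [IsZero.iff_id_eq_zero]
  have z1 : IsZero (if i = k + 1 then A else (0:B)) := by
    rw [if_neg h2]; exact isZero_zero B
  have z2 : IsZero (if i + 1 = k + 1 then A else (0:B)) := by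
    rw [if_neg (by omega)]; exact isZero_zero B
  apply biprod.hom_ext
  · exact z1.eq_of_tgt _ _
  · exact z2.eq_of_tgt _ _

lemma eq_E1 : coneInc M m Z e hd h0 ≫ conePi M m Z e hd h0 = 𝟙 (coneC (M.X m) m) := by
  ext i : 1
  by_cases h : i = m
  · subst h
    simp only [HomologicalComplex.comp_f, HomologicalComplex.id_f, coneInc, conePi,
      dif_pos rfl, eqToHom_refl, Category.id_comp, Category.comp_id]
    apply biprod.hom_ext
    · exact (show IsZero (if (i:ℤ) = i + 1 then M.X i else (0:B)) from by
        rw [if_neg (by omega)]; exact isZero_zero B).eq_of_tgt _ _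
    · simp
  · by_cases h2 : i = m + 1
    · subst h2
      simp only [HomologicalComplex.comp_f, HomologicalComplex.id_f, coneInc, conePi,
        dif_pos rfl, dif_neg (show ¬(m+1:ℤ) = m by omega), eqToHom_refl,
        Category.id_comp, Category.comp_id]
      apply biprod.hom_ext
      · simp [reassoc_of% hd]
      · exact (show IsZero (if (m+1+1:ℤ) = m + 1 then M.X m else (0:B)) from by
          rw [if_neg (by omega)]; exact isZero_zero B).eq_of_tgt _ _
    · exact (coneX_isZero (M.X m) m i h h2).eq_of_src _ _

lemma eq_E2 : coneInc M m Z e hd h0 ≫ auxPi M m Z e hd h0 = 0 := by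
  ext i : 1
  by_cases h : i = m
  · subst h
    simp [coneInc, auxPi, dif_neg (show ¬(i:ℤ) = i + 1 by omega),
      dif_neg (show ¬(i:ℤ) < i by omega)]
  · by_cases h2 : i = m + 1
    · subst h2
      simp only [HomologicalComplex.comp_f, coneInc, auxPi, dif_pos rfl,
        dif_neg (show ¬(m+1:ℤ) = m by omega), eqToHom_refl, Category.id_comp,
        Category.comp_id, HomologicalComplex.zero_f]
      simp [reassoc_of% hd]
    · simp [coneInc, dif_neg h, dif_neg h2]

lemma eq_E3 : auxInc M m Z e ≫ conePi M m Z e hd h0 = 0 := by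
  ext i : 1
  by_cases h : i = m + 1
  · subst h
    simp [auxInc, conePi, dif_pos rfl, dif_neg (show ¬(m+1:ℤ) = m by omega)]
  · by_cases h2 : m + 1 < i
    · simp [auxInc, conePi, dif_neg h, dif_pos h2, dif_neg (show ¬i = m by omega)]
    · simp [auxInc, dif_neg h, dif_neg h2]

lemma eq_E4 : auxInc M m Z e ≫ auxPi M m Z e hd h0 = 𝟙 (auxM' M m Z e) := by
  ext i : 1
  by_cases h : i = m + 1
  · subst h
    simp [auxInc, auxPi, dif_pos rfl]
  · by_cases h2 : m + 1 < i
    · simp [auxInc, auxPi, dif_neg h, dif_pos h2]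
    · exact (auxX_isZero M m Z i (by omega)).eq_of_src _ _

lemma totalSplit {X Y W : B} (f : W ≅ X ⊞ Y) :
    f.hom ≫ biprod.fst ≫ biprod.inl ≫ f.inv + f.hom ≫ biprod.snd ≫ biprod.inr ≫ f.inv
      = 𝟙 W := by
  calc f.hom ≫ biprod.fst ≫ biprod.inl ≫ f.inv + f.hom ≫ biprod.snd ≫ biprod.inr ≫ f.inv
      = f.hom ≫ ((biprod.fst ≫ biprod.inl + biprod.snd ≫ biprod.inr) ≫ f.inv) := by
        rw [Preadditive.add_comp, Preadditive.comp_add]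
        simp [Category.assoc]
    _ = 𝟙 W := by rw [biprod.total]; simp

lemma eq_E5 :
    conePi M m Z e hd h0 ≫ coneInc M m Z e hd h0 + auxPi M m Z e hd h0 ≫ auxInc M m Z e = 𝟙 M := by
  ext i : 1
  rw [HomologicalComplex.add_f_apply]
  by_cases h : i = m
  · subst h
    simp [conePi, coneInc, auxPi, auxInc, dif_pos rfl, dif_neg (show ¬(i:ℤ) = i + 1 by omega),
      dif_neg (show ¬(i:ℤ) < i by omega)]
  · by_cases h2 : i = m + 1
    · subst h2
      simp only [HomologicalComplex.comp_f, HomologicalComplex.id_f, conePi, coneInc,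
        auxPi, auxInc, dif_pos rfl, dif_neg (show ¬(m+1:ℤ) = m by omega), eqToHom_refl,
        Category.id_comp, Category.comp_id, Category.assoc, eqToHom_trans,
        eqToHom_trans_assoc, biprod.lift_fst, biprod.lift_fst_assoc, dite_true,
        dite_eq_ite, if_true, eq_self_iff_true]
      have h1 : M.d m (m+1) = biprod.inl ≫ e.inv := by rw [← hd]; simp
      rw [h1]
      exact totalSplit e
    · by_cases h3 : m + 1 < i
      · simp [conePi, coneInc, auxPi, auxInc, dif_neg h, dif_neg h2, dif_pos h3]
      · exact (h0 i (by omega)).eq_of_src _ _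

end Aux

/-- over a weakly idempotent complete additive category, a contractible
bounded complex `M` with leftmost nonzero term `M^m` has split monic differential
`d^m`, and `M` is isomorphic to the direct sum of the cone of `id_{M^m}` (placed in
degrees `m`, `m+1`) and a contractible complex of strictly smaller essential length. -/
theorem contractible_bounded_complex_splits_off_cone
    (hB : WeaklyIdempotentComplete B)
    (M : CochainComplex B ℤ) (m n : ℤ)
    (hlow : ∀ i : ℤ, i < m → IsZero (M.X i))
    (hhigh : ∀ i : ℤ, n < i → IsZero (M.X i))
    (hm : ¬ IsZero (M.X m))
    (hcontr : Nonempty (Homotopy (𝟙 M) 0)) :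
    (∃ s : M.X (m + 1) ⟶ M.X m, M.d m (m + 1) ≫ s = 𝟙 (M.X m)) ∧
    ∃ M' : CochainComplex B ℤ,
      (∀ i : ℤ, i ≤ m → IsZero (M'.X i)) ∧ (∀ i : ℤ, n < i → IsZero (M'.X i)) ∧
      Nonempty (Homotopy (𝟙 M') 0) ∧
      Nonempty (M ≅ coneOfId B (M.X m) m ⊞ M') := by
  obtain ⟨h⟩ := hcontr
  have hs : M.d m (m+1) ≫ h.hom (m+1) m = 𝟙 (M.X m) := by
    have hc := h.comm m
    rw [dNext_eq h.hom (show (ComplexShape.up ℤ).Rel m (m+1) from rfl)] at hc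
    have hz : prevD m h.hom = 0 := by
      rw [prevD_eq h.hom (show (ComplexShape.up ℤ).Rel (m-1) m from by simp)]
      rw [(hlow (m-1) (by omega)).eq_of_tgt (h.hom m (m-1)) 0, zero_comp]
    rw [hz] at hc
    simp only [HomologicalComplex.id_f, HomologicalComplex.zero_f, add_zero, zero_add] at hc
    exact hc.symm
  obtain ⟨Z, e, hd⟩ := hB (M.d m (m+1)) (h.hom (m+1) m) hs
  have hmn : m + 1 ≤ n := by
    by_contra hc
    apply hm
    by_cases h' : n < m
    · exact hhigh m h'
    · have hz1 : IsZero (M.X (m+1)) := hhigh (m+1) (by omega)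
      rw [IsZero.iff_id_eq_zero, ← hs, hz1.eq_of_tgt (M.d m (m+1)) 0, zero_comp]
  refine ⟨⟨h.hom (m+1) m, hs⟩, auxM' M m Z e, ?_, ?_, ?_, ?_⟩
  · intro i hi
    exact auxX_isZero M m Z i (by omega)
  · intro i hi
    rcases lt_trichotomy i (m+1) with h' | h' | h'
    · exact auxX_isZero M m Z i h'
    · omega
    · rw [show (auxM' M m Z e).X i = auxX M m Z i from rfl, auxX_eq_M M m Z i h']
      exact hhigh i hi
  · refine ⟨(Homotopy.ofEq ?_).trans
      (((h.compRight (auxPi M m Z e hd hlow)).compLeft (auxInc M m Z e)).trans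
        (Homotopy.ofEq ?_))⟩
    · rw [Category.id_comp]
      exact (eq_E4 M m Z e hd hlow).symm
    · simp
  · show Nonempty (M ≅ coneC (M.X m) m ⊞ auxM' M m Z e)
    refine ⟨{
      hom := biprod.lift (conePi M m Z e hd hlow) (auxPi M m Z e hd hlow)
      inv := biprod.desc (coneInc M m Z e hd hlow) (auxInc M m Z e)
      hom_inv_id := by rw [biprod.lift_desc]; exact eq_E5 M m Z e hd hlow
      inv_hom_id := by
        apply biprod.hom_ext' <;> apply biprod.hom_ext <;>
          simp [eq_E1 M m Z e hd hlow, eq_E2 M m Z e hd hlow,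
            eq_E3 M m Z e hd hlow, eq_E4 M m Z e hd hlow] }⟩
end

section
/- Any bounded above (or bounded below) contractible cochain complex over a weakly idempotent complete additive category splits. -/
open CategoryTheory CategoryTheory.Limits

universe v u

variable (B : Type u) [Category.{v} B] [Preadditive B] [HasBinaryBiproducts B]

namespace SplitAux

variable {C : Type u} [Category.{v} C] [Preadditive C] [HasBinaryBiproducts C]

/-- Strengthening of weak idempotent completeness: the decomposition can be chosen
compatibly with a given retraction. -/
lemma wic_strong (hB : WeaklyIdempotentComplete C) {X Y : C} (s : X ⟶ Y) (r : Y ⟶ X)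
    (hsr : s ≫ r = 𝟙 X) :
    ∃ (Z : C) (e : Y ≅ X ⊞ Z), s ≫ e.hom = biprod.inl ∧ e.hom ≫ biprod.fst = r := by
  obtain ⟨Z, e, he⟩ := hB s r hsr
  have hs : biprod.inl ≫ e.inv = s := by
    rw [← he, Category.assoc, e.hom_inv_id, Category.comp_id]
  set c : Y ⟶ X := r - e.hom ≫ biprod.fst with hc
  have hsc : s ≫ c = 0 := by
    rw [hc]
    simp only [Preadditive.comp_sub]
    rw [hsr, ← Category.assoc, he, biprod.inl_fst, sub_self]
  have hs' : ∀ {T : C} (f : Y ⟶ T), biprod.inl ≫ e.inv ≫ f = s ≫ f := fun f => by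
    rw [← Category.assoc, hs]
  have hsc' : ∀ {T : C} (f : X ⟶ T), s ≫ c ≫ f = 0 := fun f => by
    rw [← Category.assoc, hsc, Limits.zero_comp]
  refine ⟨Z, ⟨e.hom + c ≫ biprod.inl,
      e.inv - e.inv ≫ c ≫ biprod.inl ≫ e.inv, ?_, ?_⟩, ?_, ?_⟩
  · simp only [Preadditive.add_comp, Preadditive.sub_comp, Preadditive.comp_add,
      Preadditive.comp_sub, Category.assoc, Iso.hom_inv_id, Iso.hom_inv_id_assoc,
      Category.comp_id, hs', hsc', comp_zero, zero_comp]
    abel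
  · simp only [Preadditive.add_comp, Preadditive.sub_comp, Preadditive.comp_add,
      Preadditive.comp_sub, Category.assoc, Iso.inv_hom_id, Iso.inv_hom_id_assoc,
      Category.comp_id, hs', hsc', comp_zero, zero_comp]
    abel
  · simp only [Preadditive.comp_add, he, hsc', add_zero]
  · simp only [Preadditive.add_comp, Category.assoc, biprod.inl_fst, Category.comp_id, hc]
    abel

variable {M : CochainComplex C ℤ}

lemma relAt (h : Homotopy (𝟙 M) 0) (i : ℤ) :
    𝟙 (M.X (i + 1)) =
      M.d (i + 1) (i + 1 + 1) ≫ h.hom (i + 1 + 1) (i + 1) + h.hom (i + 1) i ≫ M.d i (i + 1) := by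
  have := h.comm (i + 1)
  rw [dNext_eq h.hom (show (ComplexShape.up ℤ).Rel (i + 1) (i + 1 + 1) by simp),
    prevD_eq h.hom (show (ComplexShape.up ℤ).Rel i (i + 1) by simp)] at this
  simpa using this

lemma relAt' (h : Homotopy (𝟙 M) 0) (i : ℤ) :
    𝟙 (M.X i) =
      M.d i (i + 1) ≫ h.hom (i + 1) i + h.hom i (i - 1) ≫ M.d (i - 1) i := by
  have := h.comm i
  rw [dNext_eq h.hom (show (ComplexShape.up ℤ).Rel i (i + 1) by simp),
    prevD_eq h.hom (show (ComplexShape.up ℤ).Rel (i - 1) i by simp)] at this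
  simpa using this

lemma d_congr {p p' : ℤ} (hp : p = p') (j : ℤ) :
    M.d p j = eqToHom (congrArg M.X hp) ≫ M.d p' j := by
  subst hp; simp

/-- An isomorphism of biproducts induced by an isomorphism on the second factor. -/
noncomputable def bimapIso {X Y Y' : C} (e : Y ≅ Y') : X ⊞ Y ≅ X ⊞ Y' where
  hom := biprod.map (𝟙 X) e.hom
  inv := biprod.map (𝟙 X) e.inv
  hom_inv_id := by ext <;> simp
  inv_hom_id := by ext <;> simp

/-! ### The bounded above case -/

/-- Splitting data at degree `i` for the downward induction:
a decomposition `M.X i ≅ N ⊞ N'` where `N'` is embedded in `M.X (i+1)` by a split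
monomorphism `incl`, through which the differential factors. -/
structure DData (M : CochainComplex C ℤ) (i : ℤ) where
  N : C
  N' : C
  φ : M.X i ≅ N ⊞ N'
  incl : N' ⟶ M.X (i + 1)
  retr : M.X (i + 1) ⟶ N'
  ir : incl ≫ retr = 𝟙 N'
  hd : M.d i (i + 1) = φ.hom ≫ biprod.snd ≫ incl

/-- Trivial splitting data in degrees where the complex vanishes above. -/
noncomputable def trivD (M : CochainComplex C ℤ) (i : ℤ) (hz : IsZero (M.X (i + 1))) :
    DData M i where
  N := M.X i
  N' := M.X (i + 1)
  φ :=
    { hom := biprod.lift (𝟙 _) 0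
      inv := biprod.fst
      hom_inv_id := by simp
      inv_hom_id := by
        ext
        all_goals try simp
        all_goals exact hz.eq_of_tgt _ _ }
  incl := 𝟙 _
  retr := 𝟙 _
  ir := by simp
  hd := hz.eq_of_tgt _ _

/-- The downward induction step. -/
noncomputable def stepD (hB : WeaklyIdempotentComplete C) (h : Homotopy (𝟙 M) 0) (i : ℤ)
    (D : DData M (i + 1)) : DData M i :=
  have hsr : (biprod.inl ≫ D.φ.inv ≫ h.hom (i + 1) i) ≫
      (M.d i (i + 1) ≫ D.φ.hom ≫ biprod.fst) = 𝟙 D.N := by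
    have rel := relAt h i
    have h1 : h.hom (i + 1) i ≫ M.d i (i + 1) =
        𝟙 (M.X (i + 1)) - M.d (i + 1) (i + 1 + 1) ≫ h.hom (i + 1 + 1) (i + 1) := by
      rw [rel]; abel
    calc (biprod.inl ≫ D.φ.inv ≫ h.hom (i + 1) i) ≫ (M.d i (i + 1) ≫ D.φ.hom ≫ biprod.fst)
        = biprod.inl ≫ D.φ.inv ≫ (h.hom (i + 1) i ≫ M.d i (i + 1)) ≫ D.φ.hom ≫ biprod.fst := by
          simp [Category.assoc]
      _ = biprod.inl ≫ D.φ.inv ≫ D.φ.hom ≫ biprod.fst -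
            biprod.inl ≫ (D.φ.inv ≫ M.d (i + 1) (i + 1 + 1)) ≫
              h.hom (i + 1 + 1) (i + 1) ≫ D.φ.hom ≫ biprod.fst := by
          rw [h1]
          simp [Preadditive.sub_comp, Preadditive.comp_sub]
      _ = 𝟙 D.N := by
          rw [D.hd]
          simp
  let W := wic_strong hB _ _ hsr
  { N := W.choose
    N' := D.N
    φ := W.choose_spec.choose ≪≫ biprod.braiding D.N W.choose
    incl := biprod.inl ≫ D.φ.inv
    retr := D.φ.hom ≫ biprod.fst
    ir := by simp
    hd := by
      have he2 := W.choose_spec.choose_spec.2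
      have hz : M.d i (i + 1) ≫ D.φ.hom ≫ biprod.snd = 0 := by
        have hdd : M.d i (i + 1) ≫ M.d (i + 1) (i + 1 + 1) = 0 := M.d_comp_d _ _ _
        rw [D.hd] at hdd
        have := hdd =≫ D.retr
        simpa [Category.assoc, D.ir] using this
      have htot : (biprod.fst : D.N ⊞ D.N' ⟶ _) ≫ biprod.inl =
          𝟙 _ - biprod.snd ≫ biprod.inr := by
        rw [← biprod.total]; abel
      symm
      calc (W.choose_spec.choose ≪≫ biprod.braiding D.N W.choose).hom ≫ biprod.snd ≫
              (biprod.inl ≫ D.φ.inv)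
          = (W.choose_spec.choose.hom ≫ biprod.fst) ≫ biprod.inl ≫ D.φ.inv := by
            simp [biprod.braiding]
        _ = (M.d i (i + 1) ≫ D.φ.hom ≫ biprod.fst) ≫ biprod.inl ≫ D.φ.inv := by
            rw [he2]
        _ = M.d i (i + 1) ≫ D.φ.hom ≫ (biprod.fst ≫ biprod.inl) ≫ D.φ.inv := by
            simp [Category.assoc]
        _ = M.d i (i + 1) := by
            rw [htot]
            simp [Preadditive.comp_sub, Preadditive.sub_comp, hz, reassoc_of% hz] }

variable (hB : WeaklyIdempotentComplete C)

lemma stepD_N' (h : Homotopy (𝟙 M) 0) (i : ℤ) (D : DData M (i + 1)) :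
    (stepD hB h i D).N' = D.N := rfl

lemma stepD_incl (h : Homotopy (𝟙 M) 0) (i : ℤ) (D : DData M (i + 1)) :
    (stepD hB h i D).incl = biprod.inl ≫ D.φ.inv := rfl

/-- The full family of splitting data for a bounded above contractible complex. -/
noncomputable def Gd (h : Homotopy (𝟙 M) 0) (b : ℤ) (hb : ∀ i, b < i → IsZero (M.X i))
    (i : ℤ) : DData M i :=
  if hbi : b ≤ i then trivD M i (hb (i + 1) (by omega))
  else stepD hB h i (Gd h b hb (i + 1))
termination_by (b - i).toNat
decreasing_by omega

lemma DData.inclCongr {i : ℤ} {E E' : DData M i} (hE : E = E') {T : C}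
    (g : M.X (i + 1) ⟶ T) :
    E.incl ≫ g = eqToHom (by rw [hE]) ≫ E'.incl ≫ g := by
  subst hE; simp

lemma DData.inlInvCongr {i : ℤ} {E E' : DData M i} (hE : E = E') {T : C} (g : M.X i ⟶ T) :
    biprod.inl ≫ E.φ.inv ≫ g = eqToHom (by rw [hE]) ≫ biprod.inl ≫ E'.φ.inv ≫ g := by
  subst hE; simp

lemma glD (h : Homotopy (𝟙 M) 0) (b : ℤ) (hb : ∀ i, b < i → IsZero (M.X i)) (i : ℤ) :
    (Gd hB h b hb i).N' = (Gd hB h b hb (i + 1)).N := by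
  by_cases hbi : b ≤ i
  · have hG0 : Gd hB h b hb i = trivD M i (hb (i + 1) (by omega)) := by
      rw [Gd.eq_def, dif_pos hbi]
    have hG1 : Gd hB h b hb (i + 1) = trivD M (i + 1) (hb (i + 1 + 1) (by omega)) := by
      rw [Gd.eq_def, dif_pos (show b ≤ i + 1 by omega)]
    rw [hG0, hG1]
    rfl
  · have hG : Gd hB h b hb i = stepD hB h i (Gd hB h b hb (i + 1)) := by
      rw [Gd.eq_def, dif_neg hbi]
    rw [hG]
    rfl

lemma inclD (h : Homotopy (𝟙 M) 0) (b : ℤ) (hb : ∀ i, b < i → IsZero (M.X i)) (i : ℤ)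
    {T : C} (g : M.X (i + 1) ⟶ T) :
    (Gd hB h b hb i).incl ≫ g =
      eqToHom (glD hB h b hb i) ≫ biprod.inl ≫ (Gd hB h b hb (i + 1)).φ.inv ≫ g := by
  by_cases hbi : b ≤ i
  · have hG0 : Gd hB h b hb i = trivD M i (hb (i + 1) (by omega)) := by
      rw [Gd.eq_def, dif_pos hbi]
    have hG1 : Gd hB h b hb (i + 1) = trivD M (i + 1) (hb (i + 1 + 1) (by omega)) := by
      rw [Gd.eq_def, dif_pos (show b ≤ i + 1 by omega)]
    rw [DData.inclCongr hG0 g, DData.inlInvCongr hG1 g]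
    show eqToHom _ ≫ 𝟙 _ ≫ g = eqToHom _ ≫ eqToHom _ ≫ biprod.inl ≫ biprod.fst ≫ g
    simp only [biprod.inl_fst_assoc, Category.id_comp, eqToHom_trans_assoc]
    erw [eqToHom_trans_assoc]
  · have hG : Gd hB h b hb i = stepD hB h i (Gd hB h b hb (i + 1)) := by
      rw [Gd.eq_def, dif_neg hbi]
    rw [DData.inclCongr hG g, stepD_incl]
    erw [Category.assoc]
    rfl

/-- The bounded above case. -/
lemma down_split (hB : WeaklyIdempotentComplete C)
    (M : CochainComplex C ℤ) (b : ℤ) (hb : ∀ i, b < i → IsZero (M.X i))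
    (h : Homotopy (𝟙 M) 0) : ∃ N : ℤ → C, Nonempty (M ≅ splitComplex C N) := by
  refine ⟨fun i => (Gd hB h b hb i).N,
    ⟨HomologicalComplex.Hom.isoOfComponents
      (fun i => (Gd hB h b hb i).φ ≪≫ bimapIso (eqToIso (glD hB h b hb i))) ?_⟩⟩
  rintro i j (rfl : i + 1 = j)
  have hsplit : (splitComplex C (fun i => (Gd hB h b hb i).N)).d i (i + 1) =
      biprod.snd ≫ biprod.inl := by
    simp [splitComplex, CochainComplex.of_d]
  rw [hsplit]
  calc ((Gd hB h b hb i).φ ≪≫ bimapIso (eqToIso (glD hB h b hb i))).hom ≫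
        biprod.snd ≫ biprod.inl
      = (Gd hB h b hb i).φ.hom ≫ biprod.snd ≫ eqToHom (glD hB h b hb i) ≫ biprod.inl := by
        simp [bimapIso]
    _ = (Gd hB h b hb i).φ.hom ≫ biprod.snd ≫ (Gd hB h b hb i).incl ≫
          ((Gd hB h b hb (i + 1)).φ.hom ≫
            biprod.map (𝟙 _) (eqToHom (glD hB h b hb (i + 1)))) := by
        rw [inclD hB h b hb i ((Gd hB h b hb (i + 1)).φ.hom ≫
          biprod.map (𝟙 _) (eqToHom (glD hB h b hb (i + 1))))]
        simp
    _ = M.d i (i + 1) ≫ ((Gd hB h b hb (i + 1)).φ ≪≫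
          bimapIso (eqToIso (glD hB h b hb (i + 1)))).hom := by
        rw [(Gd hB h b hb i).hd]
        simp [bimapIso]

/-! ### The bounded below case -/

/-- Splitting data at degree `i` for the upward induction. -/
structure UData (M : CochainComplex C ℤ) (i : ℤ) where
  N : C
  N' : C
  φ : M.X i ≅ N ⊞ N'
  q : M.X (i - 1) ⟶ N
  σ : N ⟶ M.X (i - 1)
  σq : σ ≫ q = 𝟙 N
  hd : M.d (i - 1) i = q ≫ biprod.inl ≫ φ.inv

/-- Trivial splitting data in degrees where the complex vanishes below. -/
noncomputable def trivU (M : CochainComplex C ℤ) (i : ℤ) (hz : IsZero (M.X (i - 1))) :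
    UData M i where
  N := M.X (i - 1)
  N' := M.X i
  φ :=
    { hom := biprod.lift 0 (𝟙 _)
      inv := biprod.snd
      hom_inv_id := by simp
      inv_hom_id := by
        ext
        all_goals try simp
        all_goals exact hz.eq_of_tgt _ _ }
  q := 𝟙 _
  σ := 𝟙 _
  σq := by simp
  hd := hz.eq_of_src _ _

/-- The upward induction step. -/
noncomputable def stepU (hB : WeaklyIdempotentComplete C) (h : Homotopy (𝟙 M) 0) (k : ℤ)
    (D : UData M k) : UData M (k + 1) :=
  have hwr : (biprod.inr ≫ D.φ.inv ≫ M.d k (k + 1)) ≫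
      (h.hom (k + 1) k ≫ D.φ.hom ≫ biprod.snd) = 𝟙 D.N' := by
    have rel := relAt' h k
    have h1 : M.d k (k + 1) ≫ h.hom (k + 1) k =
        𝟙 (M.X k) - h.hom k (k - 1) ≫ M.d (k - 1) k := by
      rw [rel]; abel
    calc (biprod.inr ≫ D.φ.inv ≫ M.d k (k + 1)) ≫ (h.hom (k + 1) k ≫ D.φ.hom ≫ biprod.snd)
        = biprod.inr ≫ D.φ.inv ≫ (M.d k (k + 1) ≫ h.hom (k + 1) k) ≫ D.φ.hom ≫ biprod.snd := by
          simp [Category.assoc]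
      _ = biprod.inr ≫ D.φ.inv ≫ D.φ.hom ≫ biprod.snd -
            biprod.inr ≫ D.φ.inv ≫ h.hom k (k - 1) ≫
              (M.d (k - 1) k ≫ D.φ.hom) ≫ biprod.snd := by
          rw [h1]
          simp [Preadditive.sub_comp, Preadditive.comp_sub]
      _ = 𝟙 D.N' := by
          rw [D.hd]
          simp
  let W := wic_strong hB _ _ hwr
  { N := D.N'
    N' := W.choose
    φ := W.choose_spec.choose
    q := eqToHom (congrArg M.X (show k + 1 - 1 = k by omega)) ≫ D.φ.hom ≫ biprod.snd
    σ := biprod.inr ≫ D.φ.inv ≫ eqToHom (congrArg M.X (show k = k + 1 - 1 by omega))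
    σq := by simp
    hd := by
      have he1 := W.choose_spec.choose_spec.1
      have hz : biprod.inl ≫ D.φ.inv ≫ M.d k (k + 1) = 0 := by
        have h0 : (𝟙 D.N) ≫ biprod.inl ≫ D.φ.inv ≫ M.d k (k + 1) =
            D.σ ≫ M.d (k - 1) k ≫ M.d k (k + 1) := by
          rw [← D.σq, D.hd]
          simp
        simpa [M.d_comp_d] using h0
      have htot : (biprod.snd : D.N ⊞ D.N' ⟶ _) ≫ biprod.inr =
          𝟙 _ - biprod.fst ≫ biprod.inl := by
        rw [← biprod.total]; abel
      rw [d_congr (show k + 1 - 1 = k by omega) (k + 1)]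
      symm
      calc (eqToHom (congrArg M.X (show k + 1 - 1 = k by omega)) ≫ D.φ.hom ≫ biprod.snd) ≫
              biprod.inl ≫ W.choose_spec.choose.inv
          = eqToHom (congrArg M.X (show k + 1 - 1 = k by omega)) ≫ D.φ.hom ≫ biprod.snd ≫
              ((biprod.inr ≫ D.φ.inv ≫ M.d k (k + 1)) ≫ W.choose_spec.choose.hom) ≫
              W.choose_spec.choose.inv := by
            rw [he1]; simp [Category.assoc]
        _ = eqToHom (congrArg M.X (show k + 1 - 1 = k by omega)) ≫ D.φ.hom ≫
              (biprod.snd ≫ biprod.inr) ≫ D.φ.inv ≫ M.d k (k + 1) := by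
            simp [Category.assoc]
        _ = eqToHom (congrArg M.X (show k + 1 - 1 = k by omega)) ≫ M.d k (k + 1) := by
            rw [htot]
            simp [Preadditive.comp_sub, Preadditive.sub_comp, hz, reassoc_of% hz] }

lemma stepU_N (hB : WeaklyIdempotentComplete C) (h : Homotopy (𝟙 M) 0) (k : ℤ)
    (D : UData M k) : (stepU hB h k D).N = D.N' := rfl

lemma stepU_q (hB : WeaklyIdempotentComplete C) (h : Homotopy (𝟙 M) 0) (k : ℤ)
    (D : UData M k) : (stepU hB h k D).q =
      eqToHom (congrArg M.X (show k + 1 - 1 = k by omega)) ≫ D.φ.hom ≫ biprod.snd := rfl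

/-- Transport of upward splitting data along an equality of degrees. -/
noncomputable def castU {p p' : ℤ} (hp : p = p') (D : UData M p) : UData M p' := hp ▸ D

lemma castU_N {p p' : ℤ} (hp : p = p') (D : UData M p) : (castU hp D).N = D.N := by
  subst hp; rfl

lemma castU_q {p p' : ℤ} (hp : p = p') (D : UData M p) :
    (castU hp D).q = eqToHom (congrArg M.X (show p' - 1 = p - 1 by rw [hp])) ≫ D.q ≫
      eqToHom (castU_N hp D).symm := by
  subst hp; simp [castU]

/-- The full family of splitting data for a bounded below contractible complex. -/
noncomputable def Gu (h : Homotopy (𝟙 M) 0) (a : ℤ) (ha : ∀ i, i < a → IsZero (M.X i))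
    (i : ℤ) : UData M i :=
  if hia : i ≤ a then trivU M i (ha (i - 1) (by omega))
  else castU (show i - 1 + 1 = i by omega) (stepU hB h (i - 1) (Gu h a ha (i - 1)))
termination_by (i - a).toNat
decreasing_by omega

lemma Gu_N'_congr (h : Homotopy (𝟙 M) 0) (a : ℤ) (ha : ∀ i, i < a → IsZero (M.X i))
    {p p' : ℤ} (hp : p = p') : (Gu hB h a ha p).N' = (Gu hB h a ha p').N' := by
  subst hp; rfl

lemma Gu_phi_snd (h : Homotopy (𝟙 M) 0) (a : ℤ) (ha : ∀ i, i < a → IsZero (M.X i))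
    {p p' : ℤ} (hp : p = p') {T : C} (g : (Gu hB h a ha p').N' ⟶ T) :
    eqToHom (congrArg M.X hp) ≫ (Gu hB h a ha p').φ.hom ≫ biprod.snd ≫ g =
      (Gu hB h a ha p).φ.hom ≫ biprod.snd ≫ eqToHom (Gu_N'_congr hB h a ha hp) ≫ g := by
  subst hp; simp

lemma UData.qCongr {i : ℤ} {E E' : UData M i} (hE : E = E') {T : C} (g : E.N ⟶ T) :
    E.q ≫ g = E'.q ≫ eqToHom (by rw [hE]) ≫ g := by
  subst hE; simp

lemma UData.phiSndCongr {i : ℤ} {E E' : UData M i} (hE : E = E') {T : C} (g : E.N' ⟶ T) :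
    E.φ.hom ≫ biprod.snd ≫ g = E'.φ.hom ≫ biprod.snd ≫ eqToHom (by rw [hE]) ≫ g := by
  subst hE; simp

lemma glU (h : Homotopy (𝟙 M) 0) (a : ℤ) (ha : ∀ i, i < a → IsZero (M.X i)) (i : ℤ) :
    (Gu hB h a ha i).N' = (Gu hB h a ha (i + 1)).N := by
  by_cases hia : i + 1 ≤ a
  · have hG0 : Gu hB h a ha i = trivU M i (ha (i - 1) (by omega)) := by
      rw [Gu.eq_def, dif_pos (show i ≤ a by omega)]
    have hG1 : Gu hB h a ha (i + 1) = trivU M (i + 1) (ha (i + 1 - 1) (by omega)) := by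
      rw [Gu.eq_def, dif_pos hia]
    rw [hG0, hG1]
    exact congrArg M.X (by omega)
  · have hG1 : Gu hB h a ha (i + 1) = castU (show i + 1 - 1 + 1 = i + 1 by omega)
        (stepU hB h (i + 1 - 1) (Gu hB h a ha (i + 1 - 1))) := by
      rw [Gu.eq_def, dif_neg hia]
    rw [hG1, castU_N, stepU_N]
    exact Gu_N'_congr hB h a ha (by omega)

lemma qglU (h : Homotopy (𝟙 M) 0) (a : ℤ) (ha : ∀ i, i < a → IsZero (M.X i)) (i : ℤ)
    {T : C} (f : (Gu hB h a ha (i + 1)).N ⟶ T) :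
    eqToHom (congrArg M.X (show i = i + 1 - 1 by omega)) ≫ (Gu hB h a ha (i + 1)).q ≫ f =
      (Gu hB h a ha i).φ.hom ≫ biprod.snd ≫ eqToHom (glU hB h a ha i) ≫ f := by
  by_cases hia : i + 1 ≤ a
  · have hG0 : Gu hB h a ha i = trivU M i (ha (i - 1) (by omega)) := by
      rw [Gu.eq_def, dif_pos (show i ≤ a by omega)]
    have hG1 : Gu hB h a ha (i + 1) = trivU M (i + 1) (ha (i + 1 - 1) (by omega)) := by
      rw [Gu.eq_def, dif_pos hia]
    rw [UData.qCongr hG1 f, UData.phiSndCongr hG0 (eqToHom (glU hB h a ha i) ≫ f)]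
    simp [trivU, eqToHom_trans_assoc]
    erw [eqToHom_trans_assoc, eqToHom_trans_assoc]
  · have hG1 : Gu hB h a ha (i + 1) = castU (show i + 1 - 1 + 1 = i + 1 by omega)
        (stepU hB h (i + 1 - 1) (Gu hB h a ha (i + 1 - 1))) := by
      rw [Gu.eq_def, dif_neg hia]
    rw [UData.qCongr hG1 f, castU_q, stepU_q]
    erw [Category.assoc, Category.assoc, Category.assoc, Category.assoc, eqToHom_trans_assoc]
    rw [eqToHom_trans_assoc]
    erw [Gu_phi_snd hB h a ha (show i = i + 1 - 1 by omega)]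
    erw [eqToHom_trans_assoc, eqToHom_trans_assoc]

/-- The bounded below case. -/
lemma up_split (hB : WeaklyIdempotentComplete C)
    (M : CochainComplex C ℤ) (a : ℤ) (ha : ∀ i, i < a → IsZero (M.X i))
    (h : Homotopy (𝟙 M) 0) : ∃ N : ℤ → C, Nonempty (M ≅ splitComplex C N) := by
  refine ⟨fun i => (Gu hB h a ha i).N,
    ⟨HomologicalComplex.Hom.isoOfComponents
      (fun i => (Gu hB h a ha i).φ ≪≫ bimapIso (eqToIso (glU hB h a ha i))) ?_⟩⟩
  rintro i j (rfl : i + 1 = j)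
  have hsplit : (splitComplex C (fun i => (Gu hB h a ha i).N)).d i (i + 1) =
      biprod.snd ≫ biprod.inl := by
    simp [splitComplex, CochainComplex.of_d]
  rw [hsplit]
  have e1 : M.d i (i + 1) = eqToHom (congrArg M.X (show i = i + 1 - 1 by omega)) ≫
      M.d (i + 1 - 1) (i + 1) := d_congr (show i = i + 1 - 1 by omega) (i + 1)
  rw [e1, (Gu hB h a ha (i + 1)).hd]
  calc ((Gu hB h a ha i).φ ≪≫ bimapIso (eqToIso (glU hB h a ha i))).hom ≫
        biprod.snd ≫ biprod.inl
      = (Gu hB h a ha i).φ.hom ≫ biprod.snd ≫ eqToHom (glU hB h a ha i) ≫ biprod.inl := by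
        simp [bimapIso]
    _ = eqToHom (congrArg M.X (show i = i + 1 - 1 by omega)) ≫ (Gu hB h a ha (i + 1)).q ≫
          biprod.inl := by
        rw [qglU hB h a ha i biprod.inl]
    _ = (eqToHom (congrArg M.X (show i = i + 1 - 1 by omega)) ≫
          (Gu hB h a ha (i + 1)).q ≫ biprod.inl ≫ (Gu hB h a ha (i + 1)).φ.inv) ≫
          ((Gu hB h a ha (i + 1)).φ ≪≫ bimapIso (eqToIso (glU hB h a ha (i + 1)))).hom := by
        simp [bimapIso]

end SplitAux

/-- over a weakly idempotent complete additive category, every bounded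
above contractible cochain complex splits, and every bounded below contractible
cochain complex splits. -/
theorem bounded_above_or_below_contractible_splits
    (hB : WeaklyIdempotentComplete B) :
    (∀ M : CochainComplex B ℤ, (∃ b : ℤ, ∀ i : ℤ, b < i → IsZero (M.X i)) →
      Nonempty (Homotopy (𝟙 M) 0) → ∃ N : ℤ → B, Nonempty (M ≅ splitComplex B N)) ∧
    (∀ M : CochainComplex B ℤ, (∃ a : ℤ, ∀ i : ℤ, i < a → IsZero (M.X i)) →
      Nonempty (Homotopy (𝟙 M) 0) → ∃ N : ℤ → B, Nonempty (M ≅ splitComplex B N)) := by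
  constructor
  · rintro M ⟨b, hb⟩ ⟨h⟩
    exact SplitAux.down_split hB M b hb h
  · rintro M ⟨a, ha⟩ ⟨h⟩
    exact SplitAux.up_split hB M a ha h
end

section
/- Let B be an essentially small additive category, M an object of Kar(B), and suppose there exist objects N₁, N₂ of B and an object B₀ of Kar(B) with M ⊕ B₀ ⊕ N₂ ≅ N₁ ⊕ B₀ in Kar(B). Then there exists an object B' of B with M ⊕ B' ⊕ N₂ ≅ N₁ ⊕ B'' in Kar(B) for some object B'' of B; consequently M lies in wkar(B). -/
open CategoryTheory CategoryTheory.Limits CategoryTheory.Idempotents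

universe v u

variable (B : Type u) [Category.{v} B] [Preadditive B] [HasFiniteBiproducts B]

noncomputable instance : HasBinaryBiproducts (Karoubi B) :=
  hasBinaryBiproducts_of_finite_biproducts _

/-- Objects of the weak idempotent completion `wkar(B)` inside `Kar(B)`:
those `Z` with `X ⊞ Z ≅ Y` for some `X`, `Y` coming from `B`. -/
def wkarPred (Z : Karoubi B) : Prop :=
  ∃ X Y : B, Nonempty ((toKaroubi B).obj X ⊞ Z ≅ (toKaroubi B).obj Y)

/-- The complementary direct factor of a formal direct factor. -/
def Karoubi.compl (P : Karoubi B) : Karoubi B where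
  X := P.X
  p := 𝟙 _ - P.p
  idem := by simp [Preadditive.sub_comp, Preadditive.comp_sub, P.idem]

/-- `P ⊞ Pᶜ ≅ toKaroubi P.X`. -/
noncomputable def Karoubi.complIso (P : Karoubi B) :
    P ⊞ Karoubi.compl B P ≅ (toKaroubi B).obj P.X where
  hom := biprod.desc
    ⟨P.p, by simp [P.idem]⟩
    ⟨𝟙 _ - P.p, by
      dsimp [Karoubi.compl]
      simp [Preadditive.sub_comp, Preadditive.comp_sub, P.idem]⟩
  inv := biprod.lift
    ⟨P.p, by simp [P.idem]⟩
    ⟨𝟙 _ - P.p, by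
      dsimp [Karoubi.compl]
      simp [Preadditive.sub_comp, Preadditive.comp_sub, P.idem]⟩
  hom_inv_id := by
    apply biprod.hom_ext' <;> apply biprod.hom_ext <;>
      · simp only [Category.assoc, biprod.inl_desc_assoc, biprod.inr_desc_assoc,
          biprod.lift_fst, biprod.lift_snd]
        apply Karoubi.hom_ext_iff.mpr
        simp [Karoubi.compl, P.idem, Preadditive.comp_sub, Preadditive.sub_comp]
  inv_hom_id := by
    rw [biprod.lift_desc]
    apply Karoubi.hom_ext_iff.mpr
    simp [Karoubi.comp_f, Karoubi.compl, P.idem, Preadditive.sub_comp,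
      Preadditive.comp_sub]

/-- if `M ⊞ B₀ ⊞ N₂ ≅ N₁ ⊞ B₀` in `Kar(B)` with `N₁`, `N₂` from `B`,
then there are objects `B'`, `B''` of `B` with `M ⊞ B' ⊞ N₂ ≅ N₁ ⊞ B''` in `Kar(B)`;
consequently `M` lies in `wkar(B)`. -/
theorem cancel_retract_mem_wkar [EssentiallySmall.{v} B]
    (M B₀ : Karoubi B) (N₁ N₂ : B)
    (h : Nonempty (M ⊞ B₀ ⊞ (toKaroubi B).obj N₂ ≅ (toKaroubi B).obj N₁ ⊞ B₀)) :
    (∃ B' B'' : B,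
      Nonempty (M ⊞ (toKaroubi B).obj B' ⊞ (toKaroubi B).obj N₂ ≅
        (toKaroubi B).obj N₁ ⊞ (toKaroubi B).obj B'')) ∧
    wkarPred B M := by
  haveI : HasBinaryBiproducts B := hasBinaryBiproducts_of_finite_biproducts _
  haveI : PreservesBinaryBiproducts (toKaroubi B) :=
    preservesBinaryBiproducts_of_preservesBiproducts _
  obtain ⟨e⟩ := h
  set C := Karoubi.compl B B₀ with hC
  -- main isomorphism chain
  have main : M ⊞ (toKaroubi B).obj B₀.X ⊞ (toKaroubi B).obj N₂ ≅
      (toKaroubi B).obj N₁ ⊞ (toKaroubi B).obj B₀.X := by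
    calc M ⊞ (toKaroubi B).obj B₀.X ⊞ (toKaroubi B).obj N₂
        ≅ M ⊞ (B₀ ⊞ C) ⊞ (toKaroubi B).obj N₂ :=
          biprod.mapIso (Iso.refl M)
            (biprod.mapIso (Karoubi.complIso B B₀).symm (Iso.refl _))
      _ ≅ M ⊞ B₀ ⊞ (C ⊞ (toKaroubi B).obj N₂) :=
          biprod.mapIso (Iso.refl M) (biprod.associator _ _ _)
      _ ≅ M ⊞ B₀ ⊞ ((toKaroubi B).obj N₂ ⊞ C) :=
          biprod.mapIso (Iso.refl M)
            (biprod.mapIso (Iso.refl B₀) (biprod.braiding _ _))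
      _ ≅ M ⊞ (B₀ ⊞ (toKaroubi B).obj N₂) ⊞ C :=
          biprod.mapIso (Iso.refl M) (biprod.associator _ _ _).symm
      _ ≅ (M ⊞ (B₀ ⊞ (toKaroubi B).obj N₂)) ⊞ C := (biprod.associator _ _ _).symm
      _ ≅ ((toKaroubi B).obj N₁ ⊞ B₀) ⊞ C := biprod.mapIso e (Iso.refl C)
      _ ≅ (toKaroubi B).obj N₁ ⊞ (B₀ ⊞ C) := biprod.associator _ _ _
      _ ≅ (toKaroubi B).obj N₁ ⊞ (toKaroubi B).obj B₀.X :=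
          biprod.mapIso (Iso.refl _) (Karoubi.complIso B B₀)
  refine ⟨⟨B₀.X, B₀.X, ⟨main⟩⟩, ⟨B₀.X ⊞ N₂, N₁ ⊞ B₀.X, ⟨?_⟩⟩⟩
  calc (toKaroubi B).obj (B₀.X ⊞ N₂) ⊞ M
      ≅ ((toKaroubi B).obj B₀.X ⊞ (toKaroubi B).obj N₂) ⊞ M :=
        biprod.mapIso ((toKaroubi B).mapBiprod _ _) (Iso.refl M)
    _ ≅ M ⊞ ((toKaroubi B).obj B₀.X ⊞ (toKaroubi B).obj N₂) := biprod.braiding _ _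
    _ ≅ (toKaroubi B).obj N₁ ⊞ (toKaroubi B).obj B₀.X := main
    _ ≅ (toKaroubi B).obj (N₁ ⊞ B₀.X) := ((toKaroubi B).mapBiprod _ _).symm
end

section
/- If w and v are weight structures on a triangulated category C with C_{w≤0} ⊆ C_{v≤0} and C_{w≥0} ⊆ C_{v≥0}, then w = v, i.e., both inclusions are equalities. -/
open CategoryTheory CategoryTheory.Limits CategoryTheory.Pretriangulated ZeroObject

universe v u

variable (C : Type u) [Category.{v} C] [HasZeroObject C] [HasShift C ℤ] [Preadditive C]
  [∀ n : ℤ, (shiftFunctor C n).Additive] [Pretriangulated C]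

/-- `X` is a retract of `Y`: the identity of `X` factors through `Y`. -/
def IsRetractOf {A : Type*} [Category A] (X Y : A) : Prop :=
  ∃ (i : X ⟶ Y) (p : Y ⟶ X), i ≫ p = 𝟙 X

/-- A weight structure on a (pre)triangulated category `C` (homological convention):
a pair of retraction-closed classes `le = C_{w≤0}` and `ge = C_{w≥0}`, semi-invariant
with respect to translations, orthogonal (`Hom(X, Y[1]) = 0` for `X ∈ C_{w≤0}`,
`Y ∈ C_{w≥0}`), and such that every object admits a weight decomposition. -/
structure WeightStructure where
  /-- the class `C_{w≤0}` -/
  le : C → Prop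
  /-- the class `C_{w≥0}` -/
  ge : C → Prop
  le_retract : ∀ X Y : C, le Y → IsRetractOf X Y → le X
  ge_retract : ∀ X Y : C, ge Y → IsRetractOf X Y → ge X
  /-- `C_{w≤0} ⊆ C_{w≤0}[1]` -/
  le_shift : ∀ X : C, le X → le (X⟦(-1 : ℤ)⟧)
  /-- `C_{w≥0}[1] ⊆ C_{w≥0}` -/
  ge_shift : ∀ X : C, ge X → ge (X⟦(1 : ℤ)⟧)
  /-- orthogonality -/
  orthogonal : ∀ X Y : C, le X → ge Y → ∀ f : X ⟶ Y⟦(1 : ℤ)⟧, f = 0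
  /-- weight decompositions -/
  decomp : ∀ M : C, ∃ (L R : C) (f : L ⟶ M) (g : M ⟶ R⟦(1 : ℤ)⟧)
    (h : R⟦(1 : ℤ)⟧ ⟶ L⟦(1 : ℤ)⟧), le L ∧ ge R ∧
    Triangle.mk f g h ∈ distTriang C

variable {C}

/-- The heart `C_{w=0} = C_{w≤0} ∩ C_{w≥0}` of a weight structure. -/
def WeightStructure.heart (w : WeightStructure C) (X : C) : Prop := w.le X ∧ w.ge X

/-- A weight structure is bounded if every object has weights in a finite range. -/
def WeightStructure.Bounded (w : WeightStructure C) : Prop :=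
  ∀ M : C, (∃ i : ℤ, w.ge (M⟦i⟧)) ∧ (∃ j : ℤ, w.le (M⟦j⟧))


/-- A retract is preserved by unshifting by `1`. -/
lemma IsRetractOf.of_shift_one {A : Type*} [Category A] [HasShift A ℤ] {X Y : A}
    (h : IsRetractOf (X⟦(1 : ℤ)⟧) (Y⟦(1 : ℤ)⟧)) : IsRetractOf X Y := by
  obtain ⟨i, p, hip⟩ := h
  refine ⟨(shiftEquiv A (1 : ℤ)).unitIso.hom.app X ≫ i⟦(-1 : ℤ)⟧' ≫
      (shiftEquiv A (1 : ℤ)).unitIso.inv.app Y,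
    (shiftEquiv A (1 : ℤ)).unitIso.hom.app Y ≫ p⟦(-1 : ℤ)⟧' ≫
      (shiftEquiv A (1 : ℤ)).unitIso.inv.app X, ?_⟩
  simp only [Category.assoc]
  have key : ∀ {P Q : A} (a : X ⟶ P) (d : P ⟶ X) (mi : P ⟶ Q) (b : Q ⟶ Y) (c : Y ⟶ Q)
      (mp : Q ⟶ P), a ≫ d = 𝟙 X → b ≫ c = 𝟙 Q → mi ≫ mp = 𝟙 P →
      a ≫ ((mi ≫ b) ≫ c ≫ mp ≫ d) = 𝟙 X := by
    intro P Q a d mi b c mp h1 h2 h3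
    simp only [Category.assoc, reassoc_of% h2, reassoc_of% h3, h1]
  exact key _ _ _ _ _ _ (Iso.hom_inv_id_app _ _) (Iso.inv_hom_id_app _ _)
    ((Functor.map_comp _ _ _).symm.trans ((congrArg _ hip).trans (CategoryTheory.Functor.map_id _ _)))

/-- If an object satisfies the left orthogonality condition with respect to `u.ge`,
then it lies in `u.le`. -/
lemma WeightStructure.le_of_orthogonal (u : WeightStructure C) (X : C)
    (h : ∀ Y : C, u.ge Y → ∀ f : X ⟶ Y⟦(1 : ℤ)⟧, f = 0) : u.le X := by
  obtain ⟨L, R, f, g, hc, hL, hR, hT⟩ := u.decomp X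
  have hg : g = 0 := h R hR g
  obtain ⟨s, hs⟩ := Triangle.coyoneda_exact₂ _ hT (𝟙 X)
    (by subst hg; exact Limits.comp_zero)
  exact u.le_retract X L hL ⟨s, f, hs.symm⟩

/-- If an object satisfies the right orthogonality condition with respect to `u.le`,
then it lies in `u.ge`. -/
lemma WeightStructure.ge_of_orthogonal (u : WeightStructure C) (Y : C)
    (h : ∀ X : C, u.le X → ∀ f : X ⟶ Y⟦(1 : ℤ)⟧, f = 0) : u.ge Y := by
  obtain ⟨L, R, f, g, hc, hL, hR, hT⟩ := u.decomp (Y⟦(1 : ℤ)⟧)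
  have hf : f = 0 := h L hL f
  obtain ⟨r, hr⟩ := Triangle.yoneda_exact₂ _ hT (𝟙 _) (by subst hf; exact Limits.zero_comp)
  exact u.ge_retract Y R hR (IsRetractOf.of_shift_one ⟨g, r, hr.symm⟩)

/-- if two weight structures `w`, `v` on `C` satisfy `C_{w≤0} ⊆ C_{v≤0}`
and `C_{w≥0} ⊆ C_{v≥0}`, then `w = v`: both inclusions are equalities. -/
theorem weightStructure_uniqueness (w v : WeightStructure C)
    (hle : ∀ X : C, w.le X → v.le X) (hge : ∀ X : C, w.ge X → v.ge X) :
    (∀ X : C, w.le X ↔ v.le X) ∧ (∀ X : C, w.ge X ↔ v.ge X) := by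
  constructor
  · intro X
    refine ⟨hle X, fun hv => w.le_of_orthogonal X fun Y hY f => ?_⟩
    exact v.orthogonal X Y hv (hge Y hY) f
  · intro Y
    refine ⟨hge Y, fun hv => w.ge_of_orthogonal Y fun X hX f => ?_⟩
    exact v.orthogonal X Y (hle X hX) hv f
end
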